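/- Let (K, d) be an ultrametric space and n ≥ 2. On K^n let d^n(x, y) := max_{1≤i≤n} d(x_i, y_i), let K̃^n := {x ∈ K^n : x_i ≠ x_j for all i ≠ j}, and for x ∈ K^n and A ⊆ K^n let d^n(x, A) := inf_{a∈A} d^n(x, a). Define δ(x, y) := d^n(x, y) / max( d^n(x, y), d^n(x, (K̃^n)^c), d^n(y, (K̃^n)^c) ) for x, y ∈ K̃^n, where (K̃^n)^c := K^n ∖ K̃^n. Then δ is an ultrametric on K̃^n: δ(x, y) = 0 iff x = y, δ(x, y) = δ(y, x), and δ(x, y) ≤ max( δ(x, z), δ(z, y) ) for all x, y, z ∈ K̃^n. -/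

import Mathlib

namespace NonArch

/-- The configuration set `K̃ⁿ` of tuples with pairwise distinct coordinates. -/
def distinctTuples (K : Type*) (n : ℕ) : Set (Fin n → K) :=
  {x | ∀ i j : Fin n, i ≠ j → x i ≠ x j}

/-- The ultrametric `δ` on `K̃ⁿ`, built from the sup metric `dⁿ` on `Kⁿ` and the
distances to the complement `(K̃ⁿ)ᶜ`. -/
noncomputable def deltaDist {K : Type*} [MetricSpace K] {n : ℕ}
    (x y : Fin n → K) : ℝ :=
  dist x y /
    max (dist x y)
      (max (Metric.infDist x (distinctTuples K n)ᶜ)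
        (Metric.infDist y (distinctTuples K n)ᶜ))

private lemma aux_div (a b c p q r : ℝ) (ha : 0 ≤ a) (hp : 0 ≤ p) (hq : 0 ≤ q)
    (hr : 0 ≤ r) (hc : 0 ≤ c) (hb : 0 < b) (hab : a ≤ b) (hcb : c ≤ b)
    (hrc : r ≤ max c q) :
    a / max a (max p q) ≤ b / max b (max p r) := by
  set M := max a (max p q) with hM
  set t := max b (max p r) with ht
  have hM0 : 0 ≤ M := le_trans ha (le_max_left _ _)
  rcases eq_or_lt_of_le hM0 with h0 | h0
  · have ha0 : a = 0 := le_antisymm (h0 ▸ le_max_left _ _) ha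
    rw [ha0, zero_div]
    positivity
  · have ht0 : 0 < t := lt_of_lt_of_le hb (le_max_left _ _)
    rw [div_le_div_iff₀ h0 ht0]
    have haM : a ≤ M := le_max_left _ _
    have hpM : p ≤ M := le_trans (le_max_left p q) (le_max_right _ _)
    have hqM : q ≤ M := le_trans (le_max_right p q) (le_max_right _ _)
    have h1 : a * b ≤ b * M := by nlinarith
    have h2 : a * p ≤ b * M := by nlinarith
    have h3 : a * r ≤ b * M := by
      have h4 : a * r ≤ a * max c q := mul_le_mul_of_nonneg_left hrc ha
      rcases max_cases c q with ⟨he, _⟩ | ⟨he, _⟩ <;> rw [he] at h4 <;> nlinarith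
    calc a * t = max (a * b) (max (a * p) (a * r)) := by
          rw [ht, mul_max_of_nonneg _ _ ha, mul_max_of_nonneg _ _ ha]
      _ ≤ b * M := max_le h1 (max_le h2 h3)

/-- for an ultrametric space `(K, d)` and `n ≥ 2`, `δ` is an ultrametric
on `K̃ⁿ`: it vanishes exactly on the diagonal, is symmetric, and satisfies the strong
triangle inequality. -/
theorem deltaDist_is_ultrametric {K : Type*} [MetricSpace K] [IsUltrametricDist K]
    {n : ℕ} (hn : 2 ≤ n) :
    (∀ x ∈ distinctTuples K n, ∀ y ∈ distinctTuples K n,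
      (deltaDist x y = 0 ↔ x = y)) ∧
    (∀ x ∈ distinctTuples K n, ∀ y ∈ distinctTuples K n,
      deltaDist x y = deltaDist y x) ∧
    (∀ x ∈ distinctTuples K n, ∀ y ∈ distinctTuples K n, ∀ z ∈ distinctTuples K n,
      deltaDist x y ≤ max (deltaDist x z) (deltaDist z y)) := by
  classical
  -- the complement of the configuration set is closed
  have hSc_closed : IsClosed (distinctTuples K n)ᶜ := by
    rw [isClosed_compl_iff]
    have h : distinctTuples K n =
        ⋂ (i : Fin n), ⋂ (j : Fin n), ⋂ (_ : i ≠ j), {x : Fin n → K | x i ≠ x j} := by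
      ext x; simp [distinctTuples]
    rw [h]
    exact isOpen_iInter_of_finite fun i => isOpen_iInter_of_finite fun j =>
      isOpen_iInter_of_finite fun _ =>
        isOpen_ne_fun (continuous_apply i) (continuous_apply j)
  -- the complement is nonempty
  have hne : ∀ x : Fin n → K, ((distinctTuples K n)ᶜ).Nonempty := by
    intro x
    refine ⟨fun _ => x ⟨0, by omega⟩, ?_⟩
    simp only [Set.mem_compl_iff, distinctTuples, Set.mem_setOf_eq]
    push_neg
    exact ⟨⟨0, by omega⟩, ⟨1, by omega⟩, by simp [Fin.ext_iff], rfl⟩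
  -- positivity of the distance to the complement
  have hpos : ∀ x ∈ distinctTuples K n, 0 < Metric.infDist x (distinctTuples K n)ᶜ := by
    intro x hx
    exact (hSc_closed.notMem_iff_infDist_pos (hne x)).mp (by simpa using hx)
  -- the sup metric on tuples is an ultrametric
  have hult : ∀ u v w : Fin n → K, dist u w ≤ max (dist u v) (dist v w) := by
    intro u v w
    rw [dist_pi_le_iff (le_max_of_le_left dist_nonneg)]
    intro i
    exact le_trans (IsUltrametricDist.dist_triangle_max _ _ _)
      (max_le_max (dist_le_pi_dist u v i) (dist_le_pi_dist v w i))
  -- ultrametric bound for infDist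
  have hlip : ∀ z y : Fin n → K,
      Metric.infDist z (distinctTuples K n)ᶜ ≤
        max (dist z y) (Metric.infDist y (distinctTuples K n)ᶜ) := by
    intro z y
    refine le_of_forall_pos_le_add fun ε hε => ?_
    obtain ⟨a, haS, hay⟩ := (Metric.infDist_lt_iff (hne y)).mp
      (lt_add_of_pos_right _ hε)
    calc Metric.infDist z (distinctTuples K n)ᶜ ≤ dist z a :=
          Metric.infDist_le_dist_of_mem haS
      _ ≤ max (dist z y) (dist y a) := hult z y a
      _ ≤ max (dist z y) (Metric.infDist y (distinctTuples K n)ᶜ + ε) :=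
          max_le_max le_rfl hay.le
      _ ≤ max (dist z y) (Metric.infDist y (distinctTuples K n)ᶜ) + ε := by
          refine max_le ?_ (add_le_add (le_max_right _ _) le_rfl)
          exact le_add_of_le_of_nonneg (le_max_left _ _) hε.le
  refine ⟨?_, ?_, ?_⟩
  · intro x hx y hy
    have hD : 0 < max (dist x y)
        (max (Metric.infDist x (distinctTuples K n)ᶜ)
          (Metric.infDist y (distinctTuples K n)ᶜ)) :=
      lt_of_lt_of_le (hpos x hx) (le_trans (le_max_left _ _) (le_max_right _ _))
    rw [deltaDist, div_eq_zero_iff]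
    constructor
    · rintro (h | h)
      · exact dist_eq_zero.mp h
      · exact absurd h (ne_of_gt hD)
    · rintro rfl
      left; exact dist_self x
  · intro x hx y hy
    rw [deltaDist, deltaDist, dist_comm,
      max_comm (Metric.infDist x (distinctTuples K n)ᶜ)
        (Metric.infDist y (distinctTuples K n)ᶜ)]
  · intro x hx y hy z hz
    have hxy : dist x y ≤ max (dist x z) (dist z y) := hult x z y
    by_cases hxz0 : dist x z = 0
    · obtain rfl := dist_eq_zero.mp hxz0
      exact le_max_right _ _
    by_cases hzy0 : dist z y = 0
    · obtain rfl := dist_eq_zero.mp hzy0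
      exact le_max_left _ _
    rcases le_total (dist z y) (dist x z) with h | h
    · refine le_trans ?_ (le_max_left _ _)
      rw [deltaDist, deltaDist]
      exact aux_div (dist x y) (dist x z) (dist z y) _ _ _ dist_nonneg
        Metric.infDist_nonneg Metric.infDist_nonneg Metric.infDist_nonneg
        dist_nonneg (lt_of_le_of_ne dist_nonneg (Ne.symm hxz0))
        (le_trans hxy (max_le le_rfl h)) h (hlip z y)
    · refine le_trans ?_ (le_max_right _ _)
      rw [deltaDist, deltaDist,
        max_comm (Metric.infDist x (distinctTuples K n)ᶜ)
          (Metric.infDist y (distinctTuples K n)ᶜ),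
        max_comm (Metric.infDist z (distinctTuples K n)ᶜ)
          (Metric.infDist y (distinctTuples K n)ᶜ)]
      have hzx := hlip z x
      rw [dist_comm z x] at hzx
      exact aux_div (dist x y) (dist z y) (dist x z) _ _ _ dist_nonneg
        Metric.infDist_nonneg Metric.infDist_nonneg Metric.infDist_nonneg
        dist_nonneg (lt_of_le_of_ne dist_nonneg (Ne.symm hzy0))
        (le_trans hxy (max_le h le_rfl)) h hzx

end NonArch
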